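/- For the vector fields X₁ = -x∂_y, X₂ = (1/2)(y∂_y - x∂_x), X₃ = y∂_x + (c/x³)∂_y on {x ≠ 0} ⊂ ℝ², the symmetric tensor field G = X₁⊗X₃ + X₃⊗X₁ - 2X₂⊗X₂ equals -(x²/2)∂_x⊗∂_x - (2c/x² + y²/2)∂_y⊗∂_y - (xy/2)(∂_x⊗∂_y + ∂_y⊗∂_x), and the determinant of its component matrix equals c; moreover L_{Xᵢ}G = 0 for i = 1,2,3. -/

import Mathlib

/-- Partial derivative in the x-direction. -/
noncomputable def pdx (h : ℝ × ℝ → ℝ) (p : ℝ × ℝ) : ℝ := fderiv ℝ h p (1, 0)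

/-- Partial derivative in the y-direction. -/
noncomputable def pdy (h : ℝ × ℝ → ℝ) (p : ℝ × ℝ) : ℝ := fderiv ℝ h p (0, 1)

/-- The x-component of a vector field on the plane. -/
def Vx (X : ℝ × ℝ → ℝ × ℝ) : ℝ × ℝ → ℝ := fun p => (X p).1

/-- The y-component of a vector field on the plane. -/
def Vy (X : ℝ × ℝ → ℝ × ℝ) : ℝ × ℝ → ℝ := fun p => (X p).2

/-- xx-component of the Lie derivative along X of the covariant metric tensor with
components gxx, gxy, gyy. -/
noncomputable def lieXX (X : ℝ × ℝ → ℝ × ℝ) (gxx gxy gyy : ℝ × ℝ → ℝ) (p : ℝ × ℝ) : ℝ :=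
  fderiv ℝ gxx p (X p) + 2 * (pdx (Vx X) p * gxx p + pdx (Vy X) p * gxy p)

/-- xy-component of the Lie derivative along X of the metric. -/
noncomputable def lieXY (X : ℝ × ℝ → ℝ × ℝ) (gxx gxy gyy : ℝ × ℝ → ℝ) (p : ℝ × ℝ) : ℝ :=
  fderiv ℝ gxy p (X p) + pdx (Vx X) p * gxy p + pdx (Vy X) p * gyy p
    + pdy (Vx X) p * gxx p + pdy (Vy X) p * gxy p

/-- yy-component of the Lie derivative along X of the metric. -/
noncomputable def lieYY (X : ℝ × ℝ → ℝ × ℝ) (gxx gxy gyy : ℝ × ℝ → ℝ) (p : ℝ × ℝ) : ℝ :=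
  fderiv ℝ gyy p (X p) + 2 * (pdy (Vx X) p * gxy p + pdy (Vy X) p * gyy p)

/-- X is a Killing vector field relative to the metric with components gxx, gxy, gyy,
i.e. the Lie derivative of the metric along X vanishes. -/
def IsKilling (X : ℝ × ℝ → ℝ × ℝ) (gxx gxy gyy : ℝ × ℝ → ℝ) : Prop :=
  ∀ p, lieXX X gxx gxy gyy p = 0 ∧ lieXY X gxx gxy gyy p = 0 ∧ lieYY X gxx gxy gyy p = 0

/-- Evaluation of the metric g = gxx dx⊗dx + gxy (dx⊗dy + dy⊗dx) + gyy dy⊗dy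
on two tangent vectors. -/
def gEval (gxx gxy gyy : ℝ × ℝ → ℝ) (p : ℝ × ℝ) (u v : ℝ × ℝ) : ℝ :=
  gxx p * u.1 * v.1 + gxy p * (u.1 * v.2 + u.2 * v.1) + gyy p * u.2 * v.2

/-- The Lie bracket [X,Y] of two vector fields on the plane. -/
noncomputable def vbracket (X Y : ℝ × ℝ → ℝ × ℝ) : ℝ × ℝ → ℝ × ℝ :=
  fun p => fderiv ℝ Y p (X p) - fderiv ℝ X p (Y p)

/-- xx-component of the Lie derivative of a contravariant 2-tensor (Gxx, Gxy, Gyy)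
along X: (L_X G)^{xx} = X(Gxx) - 2(∂ₓXˣ Gxx + ∂ᵧXˣ Gxy). -/
noncomputable def lieCXX (X : ℝ × ℝ → ℝ × ℝ) (Gxx Gxy Gyy : ℝ × ℝ → ℝ) (p : ℝ × ℝ) : ℝ :=
  fderiv ℝ Gxx p (X p) - 2 * (pdx (Vx X) p * Gxx p + pdy (Vx X) p * Gxy p)

/-- xy-component of the Lie derivative of a contravariant 2-tensor along X. -/
noncomputable def lieCXY (X : ℝ × ℝ → ℝ × ℝ) (Gxx Gxy Gyy : ℝ × ℝ → ℝ) (p : ℝ × ℝ) : ℝ :=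
  fderiv ℝ Gxy p (X p) - (pdx (Vx X) p * Gxy p + pdy (Vx X) p * Gyy p)
    - (pdx (Vy X) p * Gxx p + pdy (Vy X) p * Gxy p)

/-- yy-component of the Lie derivative of a contravariant 2-tensor along X. -/
noncomputable def lieCYY (X : ℝ × ℝ → ℝ × ℝ) (Gxx Gxy Gyy : ℝ × ℝ → ℝ) (p : ℝ × ℝ) : ℝ :=
  fderiv ℝ Gyy p (X p) - 2 * (pdx (Vy X) p * Gxy p + pdy (Vy X) p * Gyy p)

/-- The Milne–Pinney vector fields. -/
noncomputable def XMP1 : ℝ × ℝ → ℝ × ℝ := fun p => ((0 : ℝ), -p.1)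
noncomputable def XMP2 : ℝ × ℝ → ℝ × ℝ := fun p => (-p.1 / 2, p.2 / 2)
noncomputable def XMP3 (c : ℝ) : ℝ × ℝ → ℝ × ℝ := fun p => (p.2, c / p.1 ^ 3)

/-- Components of the Casimir tensor field G = X₁⊗X₃ + X₃⊗X₁ - 2 X₂⊗X₂. -/
noncomputable def GMPxx (c : ℝ) : ℝ × ℝ → ℝ := fun p =>
  (XMP1 p).1 * (XMP3 c p).1 + (XMP3 c p).1 * (XMP1 p).1 - 2 * ((XMP2 p).1 * (XMP2 p).1)
noncomputable def GMPxy (c : ℝ) : ℝ × ℝ → ℝ := fun p =>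
  (XMP1 p).1 * (XMP3 c p).2 + (XMP3 c p).1 * (XMP1 p).2 - 2 * ((XMP2 p).1 * (XMP2 p).2)
noncomputable def GMPyy (c : ℝ) : ℝ × ℝ → ℝ := fun p =>
  (XMP1 p).2 * (XMP3 c p).2 + (XMP3 c p).2 * (XMP1 p).2 - 2 * ((XMP2 p).2 * (XMP2 p).2)

section Aux

private lemma hfst (p : ℝ × ℝ) :
    HasFDerivAt (fun q : ℝ × ℝ => q.1) (ContinuousLinearMap.fst ℝ ℝ ℝ) p := hasFDerivAt_fst

private lemma hsnd (p : ℝ × ℝ) :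
    HasFDerivAt (fun q : ℝ × ℝ => q.2) (ContinuousLinearMap.snd ℝ ℝ ℝ) p := hasFDerivAt_snd

private lemma fd_inv3 (c : ℝ) (p v : ℝ × ℝ) (hp : p.1 ≠ 0) :
    fderiv ℝ (fun q : ℝ × ℝ => c / q.1 ^ 3) p v = -3 * c * v.1 / p.1 ^ 4 := by
  have hd : HasDerivAt (fun t : ℝ => c / t ^ 3) (-(3 * c) / p.1 ^ 4) p.1 := by
    have := (hasDerivAt_const p.1 c).div ((hasDerivAt_id p.1).pow 3) (pow_ne_zero 3 hp)
    refine this.congr_deriv ?_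
    simp only [Pi.pow_apply, id_eq]
    field_simp; ring
  have h : HasFDerivAt (fun q : ℝ × ℝ => c / q.1 ^ 3)
      ((-(3 * c) / p.1 ^ 4) • ContinuousLinearMap.fst ℝ ℝ ℝ) p :=
    hd.comp_hasFDerivAt p (hfst p)
  erw [h.fderiv]; simp; ring

private lemma hI3 (c : ℝ) (p : ℝ × ℝ) (hp : p.1 ≠ 0) :
    HasFDerivAt (fun q : ℝ × ℝ => c / q.1 ^ 3)
      ((-(3 * c) / p.1 ^ 4) • ContinuousLinearMap.fst ℝ ℝ ℝ) p := by
  have hd : HasDerivAt (fun t : ℝ => c / t ^ 3) (-(3 * c) / p.1 ^ 4) p.1 := by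
    have := (hasDerivAt_const p.1 c).div ((hasDerivAt_id p.1).pow 3) (pow_ne_zero 3 hp)
    refine this.congr_deriv ?_
    simp only [Pi.pow_apply, id_eq]
    field_simp; ring
  exact hd.comp_hasFDerivAt p (hfst p)

private lemma fdGxx (c : ℝ) (p v : ℝ × ℝ) :
    fderiv ℝ (GMPxx c) p v = -(p.1 * v.1) := by
  rw [show GMPxx c = fun q : ℝ × ℝ => (-(1:ℝ)/2) * (q.1 * q.1) from by
    funext q
    show (0:ℝ) * q.2 + q.2 * 0 - 2 * ((-q.1/2) * (-q.1/2)) = _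
    ring]
  have h := ((hfst p).mul (hfst p)).const_mul (-(1:ℝ)/2)
  erw [h.fderiv]; simp; ring

private lemma fdGxy (c : ℝ) (p v : ℝ × ℝ) :
    fderiv ℝ (GMPxy c) p v = -(v.1 * p.2 + p.1 * v.2) / 2 := by
  rw [show GMPxy c = fun q : ℝ × ℝ => (-(1:ℝ)/2) * (q.1 * q.2) from by
    funext q
    show (0:ℝ) * (c / q.1 ^ 3) + q.2 * (-q.1) - 2 * ((-q.1/2) * (q.2/2)) = _
    ring]
  have h := ((hfst p).mul (hsnd p)).const_mul (-(1:ℝ)/2)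
  erw [h.fderiv]; simp; ring

private lemma fdGyy (c : ℝ) (p v : ℝ × ℝ) (hp : p.1 ≠ 0) :
    fderiv ℝ (GMPyy c) p v = 4 * c * v.1 / p.1 ^ 3 - p.2 * v.2 := by
  rw [show GMPyy c = fun q : ℝ × ℝ =>
      (-q.1) * (c / q.1 ^ 3) + (c / q.1 ^ 3) * (-q.1) - 2 * ((q.2 * (1/2)) * (q.2 * (1/2)))
    from by
      funext q
      show (-q.1) * (c / q.1 ^ 3) + (c / q.1 ^ 3) * (-q.1) - 2 * ((q.2/2) * (q.2/2)) = _
      ring]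
  have h := (((hfst p).neg.mul (hI3 c p hp)).add ((hI3 c p hp).mul (hfst p).neg)).sub
    ((((hsnd p).mul_const (1/2)).mul ((hsnd p).mul_const (1/2))).const_mul 2)
  erw [h.fderiv]; simp
  field_simp
  ring

private lemma fdV1x (p v : ℝ × ℝ) : fderiv ℝ (Vx XMP1) p v = 0 := by
  rw [show Vx XMP1 = fun _ : ℝ × ℝ => (0:ℝ) from rfl]
  simp

private lemma fdV1y (p v : ℝ × ℝ) : fderiv ℝ (Vy XMP1) p v = -v.1 := by
  rw [show Vy XMP1 = fun q : ℝ × ℝ => -q.1 from rfl]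
  have h := (hfst p).neg
  erw [h.fderiv]; simp

private lemma fdV2x (p v : ℝ × ℝ) : fderiv ℝ (Vx XMP2) p v = -v.1 / 2 := by
  rw [show Vx XMP2 = fun q : ℝ × ℝ => -q.1 * (1/2) from by
    funext q; show -q.1 / 2 = _; ring]
  have h := (hfst p).neg.mul_const (1/2)
  erw [h.fderiv]; simp; ring

private lemma fdV2y (p v : ℝ × ℝ) : fderiv ℝ (Vy XMP2) p v = v.2 / 2 := by
  rw [show Vy XMP2 = fun q : ℝ × ℝ => q.2 * (1/2) from by
    funext q; show q.2 / 2 = _; ring]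
  have h := (hsnd p).mul_const (1/2)
  erw [h.fderiv]; simp; ring

private lemma fdV3x (c : ℝ) (p v : ℝ × ℝ) :
    fderiv ℝ (Vx (XMP3 c)) p v = v.2 := by
  rw [show Vx (XMP3 c) = fun q : ℝ × ℝ => q.2 from rfl]
  rw [(hsnd p).fderiv]; simp

private lemma fdV3y (c : ℝ) (p v : ℝ × ℝ) (hp : p.1 ≠ 0) :
    fderiv ℝ (Vy (XMP3 c)) p v = -3 * c * v.1 / p.1 ^ 4 := by
  rw [show Vy (XMP3 c) = fun q : ℝ × ℝ => c / q.1 ^ 3 from rfl]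
  exact fd_inv3 c p v hp

end Aux

/-- on {x ≠ 0}, G = X₁⊗X₃ + X₃⊗X₁ - 2X₂⊗X₂ has components
-x²/2, -xy/2, -(2c/x² + y²/2), its determinant equals c, and L_{Xᵢ}G = 0 for i=1,2,3. -/



theorem stmt_19 (c : ℝ) :
    ∀ p : ℝ × ℝ, p.1 ≠ 0 →
      (GMPxx c p = -(p.1 ^ 2 / 2) ∧
       GMPxy c p = -(p.1 * p.2 / 2) ∧
       GMPyy c p = -(2 * c / p.1 ^ 2 + p.2 ^ 2 / 2)) ∧
      GMPxx c p * GMPyy c p - GMPxy c p ^ 2 = c ∧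
      (∀ X ∈ ({XMP1, XMP2, XMP3 c} : Set (ℝ × ℝ → ℝ × ℝ)),
        lieCXX X (GMPxx c) (GMPxy c) (GMPyy c) p = 0 ∧
        lieCXY X (GMPxx c) (GMPxy c) (GMPyy c) p = 0 ∧
        lieCYY X (GMPxx c) (GMPxy c) (GMPyy c) p = 0) := by
  intro p hp
  have hcomp : GMPxx c p = -(p.1 ^ 2 / 2) ∧ GMPxy c p = -(p.1 * p.2 / 2) ∧
      GMPyy c p = -(2 * c / p.1 ^ 2 + p.2 ^ 2 / 2) := by
    refine ⟨?_, ?_, ?_⟩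
    · show (0:ℝ) * p.2 + p.2 * 0 - 2 * ((-p.1/2) * (-p.1/2)) = _; ring
    · show (0:ℝ) * (c / p.1 ^ 3) + p.2 * (-p.1) - 2 * ((-p.1/2) * (p.2/2)) = _; ring
    · show (-p.1) * (c / p.1 ^ 3) + (c / p.1 ^ 3) * (-p.1) - 2 * ((p.2/2) * (p.2/2)) = _
      field_simp; ring
  obtain ⟨h1, h2, h3⟩ := hcomp
  refine ⟨⟨h1, h2, h3⟩, ?_, ?_⟩
  · rw [h1, h2, h3]; field_simp; ring
  · intro X hX
    simp only [Set.mem_insert_iff, Set.mem_singleton_iff] at hX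
    rcases hX with rfl | rfl | rfl
    · refine ⟨?_, ?_, ?_⟩ <;>
      · simp only [lieCXX, lieCXY, lieCYY, pdx, pdy,
          fdGxx, fdGxy, fdGyy c p _ hp, fdV1x, fdV1y, h1, h2, h3]
        simp only [XMP1]
        field_simp
        try ring
    · refine ⟨?_, ?_, ?_⟩ <;>
      · simp only [lieCXX, lieCXY, lieCYY, pdx, pdy,
          fdGxx, fdGxy, fdGyy c p _ hp, fdV2x, fdV2y, h1, h2, h3]
        simp only [XMP2]
        field_simp
        try ring
    · refine ⟨?_, ?_, ?_⟩ <;>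
      · simp only [lieCXX, lieCXY, lieCYY, pdx, pdy,
          fdGxx, fdGxy, fdGyy c p _ hp, fdV3x, fdV3y c p _ hp, h1, h2, h3]
        simp only [XMP3]
        field_simp
        try ring
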